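/- arXiv:2603.14360 — 2 statements merged into one kernel-verified Lean document; each statement's English description precedes it below -/
import Mathlib

section
/- The M²RNN recurrence can simulate any vector-valued nonlinear RNN: setting f_t = 0, w_r = 0, and q_t = k_t = e₁ (the first standard basis vector in ℝ^K), the first row of the matrix state Z_t = tanh(H_{t-1} W + e₁ v_tᵀ), with H_t = Z_t, evolves as h_t = tanh(h_{t-1} W + v_tᵀ) where h_t = (H_t)_{1,:}, and the output y_t = H_tᵀ q_t equals h_tᵀ. Moreover, all other rows of H_t are determined by the same recurrence with zero input added only to the first row. -/
/-- M²RNN with `f_t = 0`, `w_r = 0`, `q_t = k_t = e₁` simulates a vector-valued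
nonlinear RNN in the first row of its state. -/
theorem m2rnn_simulates_vector_rnn (K V : ℕ) [NeZero K]
    (W : Matrix (Fin V) (Fin V) ℝ) (v : ℕ → Fin V → ℝ)
    (H : ℕ → Matrix (Fin K) (Fin V) ℝ) (h : ℕ → Fin V → ℝ)
    (hH0 : H 0 = 0)
    -- H_{t+1} = Z_{t+1} = tanh(H_t W + e₁ v_{t+1}ᵀ)  (since f = 0)
    (hHrec : ∀ t i j,
      H (t + 1) i j =
        Real.tanh ((H t * W) i j + (if i = 0 then v (t + 1) j else 0)))
    (hh0 : h 0 = 0)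
    (hhrec : ∀ t j,
      h (t + 1) j = Real.tanh ((∑ l, h t l * W l j) + v (t + 1) j)) :
    -- the first row of H_t equals h_t, the readout H_tᵀ e₁ (+ 0 ⊙ v_t) equals h_t,
    -- and all other rows follow the same recurrence with zero input
    ∀ t, (∀ j, H t 0 j = h t j) ∧
      (∀ j, (∑ i, H t i j * (if i = 0 then (1 : ℝ) else 0)) + 0 * v t j = h t j) ∧
      (∀ i j, i ≠ 0 → H (t + 1) i j = Real.tanh ((H t * W) i j)) := by
  have first : ∀ t j, H t 0 j = h t j := by
    intro t
    induction t with
    | zero => intro j; simp [hH0, hh0]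
    | succ t ih =>
      intro j
      rw [hHrec, hhrec, if_pos rfl]
      congr 1
      simp [Matrix.mul_apply, ih]
  intro t
  refine ⟨first t, ?_, ?_⟩
  · intro j
    rw [Finset.sum_eq_single 0]
    · simp [first t j]
    · intro b _ hb; simp [hb]
    · simp
  · intro i j hi
    rw [hHrec, if_neg hi, add_zero]
end

section
/- The entrywise-tanh recurrence is not associative-scannable in the following precise sense: the family of maps F_{(W,b)} : ℝ → ℝ given by F_{(W,b)}(h) = tanh(Wh + b) is not closed under composition — there exist parameters (W₁,b₁), (W₂,b₂) such that F_{(W₂,b₂)} ∘ F_{(W₁,b₁)} ≠ F_{(W,b)} for every choice of (W,b). -/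
lemma my_tanh_lt_one (x : ℝ) : Real.tanh x < 1 := by
  rw [Real.tanh_eq_sinh_div_cosh, div_lt_one (Real.cosh_pos x)]
  exact Real.sinh_lt_cosh x

lemma my_neg_one_lt_tanh (x : ℝ) : -1 < Real.tanh x := by
  rw [Real.tanh_eq_sinh_div_cosh, lt_div_iff₀ (Real.cosh_pos x)]
  have := Real.sinh_lt_cosh (x := -x)
  simp only [Real.sinh_neg, Real.cosh_neg] at this
  linarith

lemma my_tanh_injective : Function.Injective Real.tanh := by
  intro x y h
  rw [Real.tanh_eq_sinh_div_cosh, Real.tanh_eq_sinh_div_cosh,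
    div_eq_div_iff (Real.cosh_pos x).ne' (Real.cosh_pos y).ne'] at h
  have : Real.sinh (x - y) = 0 := by rw [Real.sinh_sub]; linarith
  have := Real.sinh_injective (by simpa using this : Real.sinh (x - y) = Real.sinh 0)
  linarith

/-- The one-dimensional tanh-RNN step family `h ↦ tanh (W h + b)` is not
closed under composition: some composition of two such maps is not equal (as a
function on ℝ) to any member of the family. -/
theorem tanh_family_not_closed_under_composition :
    ∃ W₁ b₁ W₂ b₂ : ℝ, ∀ W b : ℝ,
      (fun h : ℝ => Real.tanh (W₂ * Real.tanh (W₁ * h + b₁) + b₂)) ≠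
      (fun h : ℝ => Real.tanh (W * h + b)) := by
  refine ⟨1, 0, 1, 0, ?_⟩
  intro W b hfun
  have key : ∀ h : ℝ, Real.tanh h = W * h + b := by
    intro h
    have := congrFun hfun h
    simp only [one_mul, add_zero] at this
    exact my_tanh_injective this
  have h0 := key 0
  simp [Real.tanh_zero] at h0
  subst h0
  by_cases hW : W = 0
  · have h1 := key 1
    rw [hW] at h1
    simp at h1
    have : (1:ℝ) = 0 :=
      my_tanh_injective (by rw [h1, Real.tanh_zero])
    norm_num at this
  · have hx := key (2 / W)
    rw [mul_div_cancel₀ _ hW, add_zero] at hx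
    have := my_tanh_lt_one (2 / W)
    have := my_neg_one_lt_tanh (2 / W)
    linarith
end
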